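/- Define f : [0,1] → ℝ by f(λ) = √(1-λ) + √λ/2 if λ ≤ 1/2, and f(λ) = 1/(2√λ) + √λ/2 if λ > 1/2. Then f(λ) ≥ 1 for all λ ∈ [0,1]. -/
import Mathlib


noncomputable def f (l : ℝ) : ℝ :=
  if l ≤ 1 / 2 then Real.sqrt (1 - l) + Real.sqrt l / 2
  else 1 / (2 * Real.sqrt l) + Real.sqrt l / 2

theorem f_ge_one : ∀ l ∈ Set.Icc (0 : ℝ) 1, 1 ≤ f l := by
  rintro l ⟨h0, h1⟩
  unfold f
  split_ifs with h
  · set a := Real.sqrt (1 - l) with ha'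
    set b := Real.sqrt l with hb'
    have ha : 0 ≤ a := Real.sqrt_nonneg _
    have hb : 0 ≤ b := Real.sqrt_nonneg _
    have ha2 : a ^ 2 = 1 - l := Real.sq_sqrt (by linarith)
    have hb2 : b ^ 2 = l := Real.sq_sqrt h0
    -- a ≥ 3b/4 since a² = 1-l ≥ 9l/16 = 9b²/16
    have hab : 3 / 4 * b ≤ a := by
      nlinarith [sq_nonneg (a - 3 / 4 * b), sq_nonneg (a + 3 / 4 * b)]
    nlinarith [mul_le_mul_of_nonneg_right hab hb, sq_nonneg (a + b / 2 - 1)]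
  · push_neg at h
    set s := Real.sqrt l with hs'
    have hs : 0 < s := Real.sqrt_pos.mpr (by linarith)
    have : 1 / (2 * s) + s / 2 - 1 = (s - 1) ^ 2 / (2 * s) := by
      field_simp; ring
    nlinarith [sq_nonneg (s - 1), div_nonneg (sq_nonneg (s - 1)) (by linarith : (0:ℝ) ≤ 2 * s)]
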